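/- Let M > 0, λ > 0 and B ≥ 0, and let w : [-M,M] → ℝ be a twice continuously differentiable function with 0 ≤ w(s) ≤ B and w''(s) ≥ λ² w(s) for all s ∈ [-M,M]. Then w(s) ≤ 2 B e^{λ(|s| - M)} for all s ∈ [-M,M]. -/

import Mathlib

/-- ODE comparison on `[-M,M]`: a nonnegative `C²` function bounded by `B` with
`w'' ≥ λ² w` satisfies `w(s) ≤ 2 B e^{λ(|s|-M)}`. -/
theorem ode_comparison
    (M lam B : ℝ) (hM : 0 < M) (hlam : 0 < lam) (hB : 0 ≤ B) (w : ℝ → ℝ)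
    (hreg : ContDiffOn ℝ 2 w (Set.Icc (-M) M))
    (hw0 : ∀ s ∈ Set.Icc (-M) M, 0 ≤ w s)
    (hwB : ∀ s ∈ Set.Icc (-M) M, w s ≤ B)
    (hconv : ∀ s ∈ Set.Icc (-M) M,
      lam ^ 2 * w s ≤ iteratedDerivWithin 2 w (Set.Icc (-M) M) s) :
    ∀ s ∈ Set.Icc (-M) M, w s ≤ 2 * B * Real.exp (lam * (|s| - M)) := by
  have hMM : -M < M := by linarith
  set I : Set ℝ := Set.Icc (-M) M with hI
  have hU : UniqueDiffOn ℝ I := uniqueDiffOn_Icc hMM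
  -- comparison function and its derivatives
  set v : ℝ → ℝ := fun s => B * (Real.exp (lam * (s - M)) + Real.exp (lam * (-s - M)))
    with hv
  set v1 : ℝ → ℝ :=
      fun s => B * (lam * Real.exp (lam * (s - M)) - lam * Real.exp (lam * (-s - M)))
    with hv1
  have hvc : Continuous v := by fun_prop
  have hvd : ∀ x : ℝ, HasDerivAt v (v1 x) x := by
    intro x
    have h1 : HasDerivAt (fun s : ℝ => Real.exp (lam * (s - M)))
        (lam * Real.exp (lam * (x - M))) x := by
      have : HasDerivAt (fun s : ℝ => lam * (s - M)) lam x :=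
        ((hasDerivAt_id x).sub_const M).const_mul lam |>.congr_deriv (by ring)
      simpa [mul_comm] using this.exp
    have h2 : HasDerivAt (fun s : ℝ => Real.exp (lam * (-s - M)))
        (-lam * Real.exp (lam * (-x - M))) x := by
      have : HasDerivAt (fun s : ℝ => lam * (-s - M)) (-lam) x :=
        (((hasDerivAt_id x).neg).sub_const M).const_mul lam |>.congr_deriv (by ring)
      simpa [mul_comm] using this.exp
    have := (h1.add h2).const_mul B
    exact this.congr_deriv (by ring)
  have hv1d : ∀ x : ℝ, HasDerivAt v1 (lam ^ 2 * v x) x := by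
    intro x
    have h1 : HasDerivAt (fun s : ℝ => Real.exp (lam * (s - M)))
        (lam * Real.exp (lam * (x - M))) x := by
      have : HasDerivAt (fun s : ℝ => lam * (s - M)) lam x :=
        ((hasDerivAt_id x).sub_const M).const_mul lam |>.congr_deriv (by ring)
      simpa [mul_comm] using this.exp
    have h2 : HasDerivAt (fun s : ℝ => Real.exp (lam * (-s - M)))
        (-lam * Real.exp (lam * (-x - M))) x := by
      have : HasDerivAt (fun s : ℝ => lam * (-s - M)) (-lam) x :=
        (((hasDerivAt_id x).neg).sub_const M).const_mul lam |>.congr_deriv (by ring)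
      simpa [mul_comm] using this.exp
    have := ((h1.const_mul lam).sub (h2.const_mul lam)).const_mul B
    exact this.congr_deriv (by simp [hv]; ring)
  -- the difference g and its first derivative g1
  set g : ℝ → ℝ := fun s => w s - v s with hg
  set w1 : ℝ → ℝ := derivWithin w I with hw1
  set g1 : ℝ → ℝ := fun s => w1 s - v1 s with hg1
  have hgc : ContinuousOn g I := hreg.continuousOn.sub hvc.continuousOn
  have hw1reg : ContDiffOn ℝ 1 w1 I := hreg.derivWithin hU (by norm_num)
  have hwd : ∀ x ∈ Set.Ioo (-M) M, HasDerivAt w (w1 x) x := by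
    intro x hx
    have hIx : I ∈ nhds x := Icc_mem_nhds hx.1 hx.2
    have hd : DifferentiableAt ℝ w x :=
      ((hreg.differentiableOn (by norm_num)).differentiableAt hIx)
    have : w1 x = deriv w x := derivWithin_of_mem_nhds hIx
    rw [this]
    exact hd.hasDerivAt
  have hw1d : ∀ x ∈ Set.Ioo (-M) M,
      HasDerivAt w1 (iteratedDerivWithin 2 w I x) x := by
    intro x hx
    have hIx : I ∈ nhds x := Icc_mem_nhds hx.1 hx.2
    have hxI : x ∈ I := Set.Ioo_subset_Icc_self hx
    have hd : DifferentiableAt ℝ w1 x :=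
      ((hw1reg.differentiableOn (by norm_num)).differentiableAt hIx)
    have heq : iteratedDerivWithin 2 w I x = deriv w1 x := by
      rw [show (2 : ℕ) = 1 + 1 from rfl, iteratedDerivWithin_succ']
      rw [iteratedDerivWithin_one]
      exact derivWithin_of_mem_nhds hIx
    rw [heq]
    exact hd.hasDerivAt
  have hgd : ∀ x ∈ Set.Ioo (-M) M, HasDerivAt g (g1 x) x := fun x hx =>
    (hwd x hx).sub (hvd x)
  have hg1d : ∀ x ∈ Set.Ioo (-M) M,
      HasDerivAt g1 (iteratedDerivWithin 2 w I x - lam ^ 2 * v x) x := fun x hx =>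
    (hw1d x hx).sub (hv1d x)
  -- key claim: g ≤ 0 on I
  have hne : I.Nonempty := ⟨-M, Set.left_mem_Icc.2 hMM.le⟩
  obtain ⟨s₀, hs₀I, hmax⟩ := isCompact_Icc.exists_isMaxOn hne hgc
  have hbnd : g (-M) ≤ 0 ∧ g M ≤ 0 := by
    have hL := hwB (-M) (Set.left_mem_Icc.2 hMM.le)
    have hR := hwB M (Set.right_mem_Icc.2 hMM.le)
    have hBe : 0 ≤ B * Real.exp (lam * (-M - M)) :=
      mul_nonneg hB (Real.exp_pos _).le
    have hvL : v (-M) = B * (Real.exp (lam * (-M - M)) + 1) := by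
      show B * (Real.exp (lam * (-M - M)) + Real.exp (lam * (- -M - M))) = _
      rw [show lam * (- -M - M) = 0 by ring, Real.exp_zero]
    have hvR : v M = B * (1 + Real.exp (lam * (-M - M))) := by
      show B * (Real.exp (lam * (M - M)) + Real.exp (lam * (-M - M))) = _
      rw [show lam * (M - M) = 0 by ring, Real.exp_zero]
    constructor
    · show w (-M) - v (-M) ≤ 0
      rw [hvL]; nlinarith
    · show w M - v M ≤ 0
      rw [hvR]; nlinarith
  have key : g s₀ ≤ 0 := by
    by_contra hpos'
    push_neg at hpos'
    have hpos : 0 < g s₀ := hpos'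
    have hs₀Ioo : s₀ ∈ Set.Ioo (-M) M := by
      rcases eq_or_lt_of_le hs₀I.1 with h | h
      · exact absurd (h ▸ hbnd.1) (not_le.2 hpos)
      rcases eq_or_lt_of_le hs₀I.2 with h2 | h2
      · exact absurd (h2 ▸ hbnd.2) (not_le.2 hpos)
      exact ⟨h, h2⟩
    have hca : ContinuousAt g s₀ := hgc.continuousAt (Icc_mem_nhds hs₀Ioo.1 hs₀Ioo.2)
    have h1 : ∀ᶠ x in nhds s₀, 0 < g x := hca.eventually_mem (Ioi_mem_nhds hpos)
    have h2 : ∀ᶠ x in nhds s₀, x ∈ Set.Ioo (-M) M :=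
      Filter.eventually_of_mem (isOpen_Ioo.mem_nhds hs₀Ioo) (fun x hx => hx)
    obtain ⟨ε, hε, hball⟩ := Metric.eventually_nhds_iff.mp (h1.and h2)
    set δ : ℝ := ε / 2 with hδ
    have hδ0 : 0 < δ := by positivity
    have hK : ∀ x ∈ Set.Icc (s₀ - δ) (s₀ + δ), 0 < g x ∧ x ∈ Set.Ioo (-M) M := by
      intro x hx
      apply hball
      rw [Real.dist_eq]
      rw [abs_sub_lt_iff]
      constructor <;> [linarith [hx.2]; linarith [hx.1]]
    -- g1 is strictly monotone on K
    have hg1mono : StrictMonoOn g1 (Set.Icc (s₀ - δ) (s₀ + δ)) := by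
      apply strictMonoOn_of_deriv_pos (convex_Icc _ _)
      · intro x hx
        exact ((hg1d x (hK x hx).2).differentiableAt.continuousAt).continuousWithinAt
      · intro x hx
        rw [interior_Icc] at hx
        have hx' := hK x (Set.Ioo_subset_Icc_self hx)
        rw [(hg1d x hx'.2).deriv]
        have hxI : x ∈ I := Set.Ioo_subset_Icc_self hx'.2
        have := hconv x hxI
        have hgx : 0 < w x - v x := hx'.1
        nlinarith [mul_pos (pow_pos hlam 2) hgx]
    have hs₀K : s₀ ∈ Set.Icc (s₀ - δ) (s₀ + δ) := by
      constructor <;> linarith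
    rcases le_or_gt 0 (g1 s₀) with hcase | hcase
    · -- g strictly increasing to the right of s₀
      have hmono : StrictMonoOn g (Set.Icc s₀ (s₀ + δ)) := by
        apply strictMonoOn_of_deriv_pos (convex_Icc _ _)
        · apply hgc.mono
          intro x hx
          have := hK x ⟨by linarith [hx.1], hx.2⟩
          exact Set.Ioo_subset_Icc_self this.2
        · intro x hx
          rw [interior_Icc] at hx
          have hxK : x ∈ Set.Icc (s₀ - δ) (s₀ + δ) := ⟨by linarith [hx.1], hx.2.le⟩
          rw [(hgd x (hK x hxK).2).deriv]
          have := hg1mono hs₀K hxK hx.1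
          linarith
      have hmem : s₀ + δ ∈ I := Set.Ioo_subset_Icc_self (hK _ ⟨by linarith, le_refl _⟩).2
      have := hmono (Set.left_mem_Icc.2 (by linarith)) (Set.right_mem_Icc.2 (by linarith))
        (by linarith)
      exact absurd (hmax hmem) (not_le.2 this)
    · -- g strictly decreasing to the left of s₀
      have hanti : StrictAntiOn g (Set.Icc (s₀ - δ) s₀) := by
        apply strictAntiOn_of_deriv_neg (convex_Icc _ _)
        · apply hgc.mono
          intro x hx
          have := hK x ⟨hx.1, by linarith [hx.2]⟩
          exact Set.Ioo_subset_Icc_self this.2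
        · intro x hx
          rw [interior_Icc] at hx
          have hxK : x ∈ Set.Icc (s₀ - δ) (s₀ + δ) := ⟨hx.1.le, by linarith [hx.2]⟩
          rw [(hgd x (hK x hxK).2).deriv]
          have := hg1mono hxK hs₀K hx.2
          linarith
      have hmem : s₀ - δ ∈ I := Set.Ioo_subset_Icc_self (hK _ ⟨le_refl _, by linarith⟩).2
      have := hanti (Set.left_mem_Icc.2 (by linarith)) (Set.right_mem_Icc.2 (by linarith))
        (by linarith)
      exact absurd (hmax hmem) (not_le.2 this)
  -- conclude
  intro s hs
  have hgs : g s ≤ 0 := le_trans (hmax hs) key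
  have hws : w s ≤ v s := by simpa [hg, sub_nonpos] using hgs
  have e1 : Real.exp (lam * (s - M)) ≤ Real.exp (lam * (|s| - M)) := by
    apply Real.exp_le_exp.mpr
    have : s ≤ |s| := le_abs_self s
    nlinarith
  have e2 : Real.exp (lam * (-s - M)) ≤ Real.exp (lam * (|s| - M)) := by
    apply Real.exp_le_exp.mpr
    have : -s ≤ |s| := neg_le_abs s
    nlinarith
  calc w s ≤ v s := hws
    _ ≤ 2 * B * Real.exp (lam * (|s| - M)) := by
        simp only [hv]
        nlinarith [mul_le_mul_of_nonneg_left e1 hB, mul_le_mul_of_nonneg_left e2 hB]
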